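/- Let b be the map on words defined as follows: given a word w ∈ L_Rect, first substitute each letter via 2 ↦ p, u ↦ q, d ↦ r, 1 ↦ s, and then, if the resulting word contains the letter r, reverse the prefix consisting of all letters strictly before the last occurrence of r. Then b is a bijection from L_Rect to L_Evil, it preserves the length of each word, and the number of occurrences of the letter d in w equals the number of occurrences of the letter r in b(w). -/

import Mathlib

/-- The four-letter alphabet `{1, 2, u, d}`. -/
inductive Ar : Type
  | one : Ar
  | two : Ar
  | u : Ar
  | d : Ar
deriving DecidableEq

/-- The four-letter alphabet `{p, q, r, s}`. -/
inductive Ae : Type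
  | p : Ae
  | q : Ae
  | r : Ae
  | s : Ae
deriving DecidableEq

/-- `L_Rect`: nonempty words over `{1, 2, u, d}` ending in `1` with no factor `21`
and no factor `u1`. -/
def LRect : Set (List Ar) :=
  {w | w ≠ [] ∧ w.getLast? = some Ar.one ∧
    ¬ [Ar.two, Ar.one] <:+: w ∧ ¬ [Ar.u, Ar.one] <:+: w}

/-- `L_Evil`: nonempty words over `{p, q, r, s}` ending in `s`, with no factor `sp`
and no factor `sq`, in which every occurrence of `p` or `q` is followed later in
the word by an occurrence of `r`. -/
def LEvil : Set (List Ae) :=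
  {w | w ≠ [] ∧ w.getLast? = some Ae.s ∧
    ¬ [Ae.s, Ae.p] <:+: w ∧ ¬ [Ae.s, Ae.q] <:+: w ∧
    ∀ i, i < w.length → (w.getD i Ae.s = Ae.p ∨ w.getD i Ae.s = Ae.q) →
      ∃ j, j < w.length ∧ i < j ∧ w.getD j Ae.s = Ae.r}

/-- The letter substitution `2 ↦ p`, `u ↦ q`, `d ↦ r`, `1 ↦ s`. -/
def subst : Ar → Ae
  | Ar.two => Ae.p
  | Ar.u => Ae.q
  | Ar.d => Ae.r
  | Ar.one => Ae.s

/-- The map `b`: substitute the letters via `subst`, and then, if the resulting word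
contains the letter `r`, reverse the prefix consisting of all letters strictly before
the last occurrence of `r`.  (If `r` does not occur in `v := w.map subst`, then
`v.reverse.indexOf Ae.r = v.length`, the cut index `m` is `0` by truncated
subtraction, and the word is left unchanged; if `r` occurs, `m` is the position of
its last occurrence.) -/
def bmap (w : List Ar) : List Ae :=
  let v := w.map subst
  let m := v.length - 1 - v.reverse.idxOf Ae.r
  (v.take m).reverse ++ v.drop m

-- auxiliary
def subst' : Ae → Ar
  | Ae.p => Ar.two
  | Ae.q => Ar.u
  | Ae.r => Ar.d
  | Ae.s => Ar.one

lemma subst_subst' (a : Ae) : subst (subst' a) = a := by cases a <;> rfl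
lemma subst'_subst (a : Ar) : subst' (subst a) = a := by cases a <;> rfl
lemma subst_inj : Function.Injective subst := fun a b h => by
  have := congrArg subst' h; simpa [subst'_subst] using this

def phi (v : List Ae) : List Ae :=
  (v.take (v.length - 1 - v.reverse.idxOf Ae.r)).reverse ++
    v.drop (v.length - 1 - v.reverse.idxOf Ae.r)

lemma bmap_eq (w : List Ar) : bmap w = phi (w.map subst) := rfl

lemma phi_length (v : List Ae) : (phi v).length = v.length := by
  unfold phi
  simp only [List.length_append, List.length_reverse, List.length_take, List.length_drop]
  omega

lemma phi_count (a : Ae) (v : List Ae) : (phi v).count a = v.count a := by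
  unfold phi
  rw [List.count_append, List.count_reverse, ← List.count_append, List.take_append_drop]

lemma phi_of_not_mem {v : List Ae} (h : Ae.r ∉ v) : phi v = v := by
  unfold phi
  have h1 : v.reverse.idxOf Ae.r = v.length := by
    rw [List.idxOf_eq_length_iff.2 (by simpa using h), List.length_reverse]
  rw [h1]
  have h2 : v.length - 1 - v.length = 0 := by omega
  simp [h2]

lemma phi_spec (c t : List Ae) (ht : Ae.r ∉ t) :
    phi (c ++ Ae.r :: t) = c.reverse ++ Ae.r :: t := by
  unfold phi
  have hrev : (c ++ Ae.r :: t).reverse = t.reverse ++ (Ae.r :: c.reverse) := by simp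
  have hidx : ((c ++ Ae.r :: t).reverse).idxOf Ae.r = t.length := by
    rw [hrev, List.idxOf_append_of_notMem (by simpa using ht)]
    simp [List.idxOf_cons_self]
  have hm : (c ++ Ae.r :: t).length - 1 - t.length = c.length := by
    simp only [List.length_append, List.length_cons]; omega
  rw [hidx, hm, List.take_left, List.drop_left]

lemma exists_last_r : ∀ (v : List Ae), Ae.r ∈ v → ∃ c t, v = c ++ Ae.r :: t ∧ Ae.r ∉ t := by
  intro v
  induction v with
  | nil => simp
  | cons x xs ih =>
    intro h
    by_cases hx : Ae.r ∈ xs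
    · obtain ⟨c, t, rfl, ht⟩ := ih hx
      exact ⟨x :: c, t, rfl, ht⟩
    · have hxr : x = Ae.r := by
        rcases List.mem_cons.1 h with h | h
        · exact h.symm
        · exact absurd h hx
      exact ⟨[], xs, by rw [hxr]; rfl, hx⟩

lemma phi_invol (v : List Ae) : phi (phi v) = v := by
  by_cases h : Ae.r ∈ v
  · obtain ⟨c, t, rfl, ht⟩ := exists_last_r v h
    rw [phi_spec c t ht, phi_spec c.reverse t ht, List.reverse_reverse]
  · rw [phi_of_not_mem h, phi_of_not_mem h]

lemma pair_infix_of_getD {α : Type*} (d a b : α) :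
    ∀ (v : List α) (i : ℕ), i + 1 < v.length → v.getD i d = a → v.getD (i+1) d = b →
      [a, b] <:+: v := by
  intro v
  induction v with
  | nil => intro i h _ _; simp at h
  | cons x xs ih =>
    intro i h h1 h2
    cases i with
    | zero =>
      cases xs with
      | nil => simp at h
      | cons y ys =>
        simp only [List.getD_cons_zero, List.getD_cons_succ] at h1 h2
        exact ⟨[], ys, by rw [← h1, ← h2]; rfl⟩
    | succ i =>
      exact List.infix_cons (ih i (by simpa using h) (by simpa using h1) (by simpa using h2))

lemma getD_of_pair_infix {α : Type*} (d a b : α) {v : List α} (h : [a, b] <:+: v) :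
    ∃ i, i + 1 < v.length ∧ v.getD i d = a ∧ v.getD (i+1) d = b := by
  obtain ⟨u, t, rfl⟩ := h
  rw [List.append_assoc]
  refine ⟨u.length, by simp only [List.length_append, List.length_cons]; omega, ?_, ?_⟩
  · rw [List.getD_append_right _ _ _ _ le_rfl]
    simp
  · rw [List.getD_append_right _ _ _ _ (by omega)]
    have : u.length + 1 - u.length = 1 := by omega
    rw [this]
    rfl

def LMid : Set (List Ae) :=
  {v | v ≠ [] ∧ v.getLast? = some Ae.s ∧ ¬ [Ae.p, Ae.s] <:+: v ∧ ¬ [Ae.q, Ae.s] <:+: v}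

lemma getD_all_s {t : List Ae} (h : ∀ b ∈ t, b = Ae.s) (j : ℕ) : t.getD j Ae.s = Ae.s := by
  rcases lt_or_ge j t.length with hj | hj
  · rw [List.getD_eq_getElem _ _ hj]
    exact h _ (List.getElem_mem hj)
  · exact List.getD_eq_default _ _ hj

lemma getD_mid (x t : List Ae) (d : Ae) (j : ℕ) :
    (x ++ Ae.r :: t).getD j d =
      if j < x.length then x.getD j d
      else if j = x.length then Ae.r
      else t.getD (j - x.length - 1) d := by
  split_ifs with h1 h2
  · exact List.getD_append _ _ _ _ h1
  · rw [List.getD_append_right _ _ _ _ (le_of_eq h2.symm), h2]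
    simp
  · rw [List.getD_append_right _ _ _ _ (by omega)]
    have : j - x.length = (j - x.length - 1) + 1 := by omega
    rw [this]
    rfl

lemma last_of_mid {c t : List Ae} {x : Ae} (h : (c ++ x :: t).getLast? = some Ae.s)
    (hx : x ≠ Ae.s) : t.getLast? = some Ae.s := by
  rw [show c ++ x :: t = (c ++ [x]) ++ t by simp, List.getLast?_append] at h
  cases ht : t.getLast? with
  | none =>
    rw [ht] at h
    simp only [Option.none_or, List.getLast?_append] at h
    simp at h
    exact absurd h hx
  | some a =>
    rw [ht] at h
    simpa using h

lemma mid_last {c t : List Ae} (x : Ae) (h : t.getLast? = some Ae.s) :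
    (c ++ x :: t).getLast? = some Ae.s := by
  rw [show c ++ x :: t = (c ++ [x]) ++ t by simp, List.getLast?_append, h]
  rfl

lemma getLast_map_iff (w : List Ar) :
    (w.map subst).getLast? = some Ae.s ↔ w.getLast? = some Ar.one := by
  rw [List.getLast?_map]
  cases h : w.getLast? with
  | none => simp
  | some a => cases a <;> simp [subst]

lemma pair_infix_map_iff (a b : Ar) (w : List Ar) :
    [subst a, subst b] <:+: w.map subst ↔ [a, b] <:+: w := by
  constructor
  · intro h
    obtain ⟨i, hi, h1, h2⟩ := getD_of_pair_infix (subst Ar.one) (subst a) (subst b) h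
    rw [List.length_map] at hi
    rw [List.getD_map] at h1 h2
    · exact pair_infix_of_getD Ar.one a b w i hi (subst_inj h1) (subst_inj h2)
  · intro h
    have := h.map subst
    simpa using this

lemma mem_LMid_iff (w : List Ar) : w.map subst ∈ LMid ↔ w ∈ LRect := by
  unfold LMid LRect
  simp only [Set.mem_setOf_eq]
  rw [getLast_map_iff]
  constructor
  · rintro ⟨h1, h2, h3, h4⟩
    refine ⟨by simpa using h1, h2, fun h => h3 ?_, fun h => h4 ?_⟩
    · exact (pair_infix_map_iff Ar.two Ar.one w).2 h
    · exact (pair_infix_map_iff Ar.u Ar.one w).2 h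
  · rintro ⟨h1, h2, h3, h4⟩
    refine ⟨by simpa using h1, h2, fun h => h3 ?_, fun h => h4 ?_⟩
    · exact (pair_infix_map_iff Ar.two Ar.one w).1 h
    · exact (pair_infix_map_iff Ar.u Ar.one w).1 h

lemma all_s_of_no_r : ∀ (t : List Ae), t.getLast? = some Ae.s →
    ¬ [Ae.p, Ae.s] <:+: t → ¬ [Ae.q, Ae.s] <:+: t → Ae.r ∉ t →
    ∀ b ∈ t, b = Ae.s := by
  intro t
  induction t with
  | nil => simp
  | cons x xs ih =>
    intro hl hp hq hr b hb
    cases xs with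
    | nil =>
      simp only [List.getLast?_singleton, Option.some.injEq] at hl
      simp only [List.mem_singleton] at hb
      rw [hb, hl]
    | cons y ys =>
      have hih : ∀ b ∈ y :: ys, b = Ae.s := by
        apply ih
        · simpa [List.getLast?_cons_cons] using hl
        · exact fun h => hp (List.infix_cons h)
        · exact fun h => hq (List.infix_cons h)
        · exact fun h => hr (List.mem_cons_of_mem _ h)
      have hy : y = Ae.s := hih y List.mem_cons_self
      have hx : x = Ae.s := by
        cases hc : x with
        | p => exact absurd ⟨[], ys, by rw [hc, hy]; rfl⟩ hp
        | q => exact absurd ⟨[], ys, by rw [hc, hy]; rfl⟩ hq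
        | r => exact absurd (by rw [← hc]; exact List.mem_cons_self) hr
        | s => rfl
      rcases List.mem_cons.1 hb with h | h
      · rw [h, hx]
      · exact hih b h

lemma phi_mem_LEvil {v : List Ae} (hv : v ∈ LMid) : phi v ∈ LEvil := by
  obtain ⟨hne, hl, hp, hq⟩ := hv
  by_cases hr : Ae.r ∈ v
  · obtain ⟨c, t, rfl, ht⟩ := exists_last_r v hr
    have htl : t.getLast? = some Ae.s := last_of_mid hl (by decide)
    have hsuf : t <:+: c ++ Ae.r :: t :=
      ((List.suffix_cons Ae.r t).trans (List.suffix_append c _)).isInfix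
    have hts : ∀ b ∈ t, b = Ae.s :=
      all_s_of_no_r t htl (fun h => hp (h.trans hsuf)) (fun h => hq (h.trans hsuf)) ht
    rw [phi_spec c t ht]
    refine ⟨by simp, mid_last Ae.r htl, ?_, ?_, ?_⟩
    · intro h
      obtain ⟨i, hi, h1, h2⟩ := getD_of_pair_infix Ae.s _ _ h
      rw [getD_mid] at h1 h2
      simp only [List.length_reverse] at h1 h2
      have hi1 : i + 1 < c.length := by
        by_contra hcon
        push_neg at hcon
        rw [if_neg (by omega)] at h2
        rcases eq_or_lt_of_le hcon with heq | hlt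
        · rw [if_pos heq.symm] at h2; exact absurd h2 (by decide)
        · rw [if_neg (by omega), getD_all_s hts] at h2; exact absurd h2 (by decide)
      rw [if_pos (by omega : i < c.length)] at h1
      rw [if_pos hi1] at h2
      have hinf : [Ae.s, Ae.p] <:+: c.reverse :=
        pair_infix_of_getD Ae.s _ _ c.reverse i (by simpa using hi1) h1 h2
      have hinf2 : [Ae.p, Ae.s] <:+: c :=
        List.reverse_infix.1 (show [Ae.p, Ae.s].reverse <:+: c.reverse by simpa using hinf)
      exact hp (hinf2.trans (List.prefix_append c (Ae.r :: t)).isInfix)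
    · intro h
      obtain ⟨i, hi, h1, h2⟩ := getD_of_pair_infix Ae.s _ _ h
      rw [getD_mid] at h1 h2
      simp only [List.length_reverse] at h1 h2
      have hi1 : i + 1 < c.length := by
        by_contra hcon
        push_neg at hcon
        rw [if_neg (by omega)] at h2
        rcases eq_or_lt_of_le hcon with heq | hlt
        · rw [if_pos heq.symm] at h2; exact absurd h2 (by decide)
        · rw [if_neg (by omega), getD_all_s hts] at h2; exact absurd h2 (by decide)
      rw [if_pos (by omega : i < c.length)] at h1
      rw [if_pos hi1] at h2
      have hinf : [Ae.s, Ae.q] <:+: c.reverse :=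
        pair_infix_of_getD Ae.s _ _ c.reverse i (by simpa using hi1) h1 h2
      have hinf2 : [Ae.q, Ae.s] <:+: c :=
        List.reverse_infix.1 (show [Ae.q, Ae.s].reverse <:+: c.reverse by simpa using hinf)
      exact hq (hinf2.trans (List.prefix_append c (Ae.r :: t)).isInfix)
    · intro i hilen hpq
      have hi1 : i < c.length := by
        by_contra hcon
        push_neg at hcon
        rw [getD_mid] at hpq
        simp only [List.length_reverse] at hpq
        rw [if_neg (by omega)] at hpq
        rcases eq_or_lt_of_le hcon with heq | hlt
        · rw [if_pos heq.symm] at hpq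
          rcases hpq with h | h <;> exact absurd h (by decide)
        · rw [if_neg (by omega), getD_all_s hts] at hpq
          rcases hpq with h | h <;> exact absurd h (by decide)
      refine ⟨c.length, by simp only [List.length_append, List.length_reverse,
        List.length_cons]; omega, hi1, ?_⟩
      rw [getD_mid]
      simp
  · rw [phi_of_not_mem hr]
    have hall := all_s_of_no_r v hl hp hq hr
    refine ⟨hne, hl, ?_, ?_, ?_⟩
    · intro h
      obtain ⟨i, hi, h1, h2⟩ := getD_of_pair_infix Ae.s _ _ h
      rw [getD_all_s hall] at h2
      exact absurd h2 (by decide)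
    · intro h
      obtain ⟨i, hi, h1, h2⟩ := getD_of_pair_infix Ae.s _ _ h
      rw [getD_all_s hall] at h2
      exact absurd h2 (by decide)
    · intro i hi hpq
      rw [getD_all_s hall] at hpq
      rcases hpq with h | h <;> exact absurd h (by decide)

lemma phi_mem_LMid {e : List Ae} (he : e ∈ LEvil) : phi e ∈ LMid := by
  obtain ⟨hne, hl, hsp, hsq, hf⟩ := he
  by_cases hr : Ae.r ∈ e
  · obtain ⟨c, t, rfl, ht⟩ := exists_last_r e hr
    have htl : t.getLast? = some Ae.s := last_of_mid hl (by decide)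
    have hts : ∀ b ∈ t, b = Ae.s := by
      intro b hb
      obtain ⟨i, hilen, hib⟩ := List.mem_iff_getElem.1 hb
      have key : ∀ hbc : (b = Ae.p ∨ b = Ae.q), False := by
        intro hbc
        have hg : (c ++ Ae.r :: t).getD (c.length + 1 + i) Ae.s = b := by
          rw [getD_mid, if_neg (by omega), if_neg (by omega)]
          have h' : c.length + 1 + i - c.length - 1 = i := by omega
          rw [h', List.getD_eq_getElem _ _ hilen, hib]
        obtain ⟨j, hjlen, hij, hjr⟩ := hf (c.length + 1 + i)
          (by simp only [List.length_append, List.length_cons]; omega)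
          (by rcases hbc with h | h
              · exact Or.inl (by rw [hg, h])
              · exact Or.inr (by rw [hg, h]))
        rw [getD_mid, if_neg (by omega), if_neg (by omega)] at hjr
        rcases lt_or_ge (j - c.length - 1) t.length with hj | hj
        · rw [List.getD_eq_getElem _ _ hj] at hjr
          exact absurd (hjr ▸ List.getElem_mem hj) ht
        · rw [List.getD_eq_default _ _ hj] at hjr
          exact absurd hjr (by decide)
      cases b with
      | p => exact absurd (Or.inl rfl) key
      | q => exact absurd (Or.inr rfl) key
      | r => exact absurd hb ht
      | s => rfl
    rw [phi_spec c t ht]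
    refine ⟨by simp, mid_last Ae.r htl, ?_, ?_⟩
    · intro h
      obtain ⟨i, hi, h1, h2⟩ := getD_of_pair_infix Ae.s _ _ h
      rw [getD_mid] at h1 h2
      simp only [List.length_reverse] at h1 h2
      have hi0 : i < c.length := by
        by_contra hcon
        push_neg at hcon
        rw [if_neg (by omega)] at h1
        rcases eq_or_lt_of_le hcon with heq | hlt
        · rw [if_pos heq.symm] at h1; exact absurd h1 (by decide)
        · rw [if_neg (by omega), getD_all_s hts] at h1; exact absurd h1 (by decide)
      rcases lt_or_ge (i + 1) c.length with hi1 | hge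
      · rw [if_pos hi0] at h1
        rw [if_pos hi1] at h2
        have hinf : [Ae.p, Ae.s] <:+: c.reverse :=
          pair_infix_of_getD Ae.s _ _ c.reverse i (by simpa using hi1) h1 h2
        have hinf2 : [Ae.s, Ae.p] <:+: c :=
          List.reverse_infix.1 (show [Ae.s, Ae.p].reverse <:+: c.reverse by simpa using hinf)
        exact hsp (hinf2.trans (List.prefix_append c (Ae.r :: t)).isInfix)
      · have heq : i + 1 = c.length := by omega
        rw [if_neg (by omega), if_pos heq] at h2
        exact absurd h2 (by decide)
    · intro h
      obtain ⟨i, hi, h1, h2⟩ := getD_of_pair_infix Ae.s _ _ h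
      rw [getD_mid] at h1 h2
      simp only [List.length_reverse] at h1 h2
      have hi0 : i < c.length := by
        by_contra hcon
        push_neg at hcon
        rw [if_neg (by omega)] at h1
        rcases eq_or_lt_of_le hcon with heq | hlt
        · rw [if_pos heq.symm] at h1; exact absurd h1 (by decide)
        · rw [if_neg (by omega), getD_all_s hts] at h1; exact absurd h1 (by decide)
      rcases lt_or_ge (i + 1) c.length with hi1 | hge
      · rw [if_pos hi0] at h1
        rw [if_pos hi1] at h2
        have hinf : [Ae.q, Ae.s] <:+: c.reverse :=
          pair_infix_of_getD Ae.s _ _ c.reverse i (by simpa using hi1) h1 h2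
        have hinf2 : [Ae.s, Ae.q] <:+: c :=
          List.reverse_infix.1 (show [Ae.s, Ae.q].reverse <:+: c.reverse by simpa using hinf)
        exact hsq (hinf2.trans (List.prefix_append c (Ae.r :: t)).isInfix)
      · have heq : i + 1 = c.length := by omega
        rw [if_neg (by omega), if_pos heq] at h2
        exact absurd h2 (by decide)
  · rw [phi_of_not_mem hr]
    have hnor : ∀ i, i < e.length → e.getD i Ae.s ≠ Ae.p ∧ e.getD i Ae.s ≠ Ae.q := by
      intro i hi
      constructor <;> intro hx
      · obtain ⟨j, hjlen, _, hjr⟩ := hf i hi (Or.inl hx)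
        rw [List.getD_eq_getElem _ _ hjlen] at hjr
        exact hr (hjr ▸ List.getElem_mem hjlen)
      · obtain ⟨j, hjlen, _, hjr⟩ := hf i hi (Or.inr hx)
        rw [List.getD_eq_getElem _ _ hjlen] at hjr
        exact hr (hjr ▸ List.getElem_mem hjlen)
    refine ⟨hne, hl, ?_, ?_⟩
    · intro h
      obtain ⟨i, hi, h1, h2⟩ := getD_of_pair_infix Ae.s _ _ h
      exact (hnor i (by omega)).1 h1
    · intro h
      obtain ⟨i, hi, h1, h2⟩ := getD_of_pair_infix Ae.s _ _ h
      exact (hnor i (by omega)).2 h1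

/-- `b` is a bijection from `L_Rect` onto `L_Evil` which preserves the length of each
word, and the number of `d`'s in `w` equals the number of `r`'s in `b w`. -/
theorem bmap_bijOn :
    Set.BijOn bmap LRect LEvil ∧
    ∀ w ∈ LRect, (bmap w).length = w.length ∧ w.count Ar.d = (bmap w).count Ae.r := by
  have key : ∀ w, (phi (bmap w)).map subst' = w := by
    intro w
    rw [bmap_eq, phi_invol, List.map_map,
      show subst' ∘ subst = id from funext subst'_subst, List.map_id]
  constructor
  · refine ⟨?_, ?_, ?_⟩
    · intro w hw
      rw [bmap_eq]
      exact phi_mem_LEvil ((mem_LMid_iff w).2 hw)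
    · intro w1 _ w2 _ h
      rw [← key w1, ← key w2, h]
    · intro e he
      refine ⟨(phi e).map subst', ?_, ?_⟩
      · apply (mem_LMid_iff _).1
        rw [List.map_map, show subst ∘ subst' = id from funext subst_subst', List.map_id]
        exact phi_mem_LMid he
      · rw [bmap_eq, List.map_map, show subst ∘ subst' = id from funext subst_subst',
          List.map_id, phi_invol]
  · intro w _
    constructor
    · rw [bmap_eq, phi_length, List.length_map]
    · rw [bmap_eq, phi_count]
      rw [show Ae.r = subst Ar.d from rfl, List.count_map_of_injective _ _ subst_inj]
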